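/- Let d ≥ 1 and let Ξ ⊆ ℝ^d be an open set such that ∂Ξ is a (d−1)-set. Then for all r₀, t₀ > 0 there exists a constant C > 0 (depending only on d, r₀, t₀ and the (d−1)-set constants of ∂Ξ) such that |{x ∈ Ξ : |x − x₀| < r and dist(x, ℝ^d ∖ Ξ) ≤ t r}| ≤ C t r^d for all x₀ in the closure of Ξ, all r ∈ (0, r₀], and all t ∈ (0, t₀], where |·| denotes d-dimensional Lebesgue measure. -/

import Mathlib

open MeasureTheory Metric Set
open scoped ENNReal

set_option maxHeartbeats 1000000

lemma strip_calc1 (d : ℕ) (hd : 1 ≤ d) (b₁ b₂ t r ω : ℝ) (hb₁ : 0 < b₁) (hb₂ : 0 < b₂)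
    (ht : 0 < t) (hr : 0 < r) (hω : 0 < ω) :
    b₂ * (5*r) ^ ((d:ℝ)-1) * ((2*(t*r)) ^ d * ω) =
      ((b₂/b₁) * 10 ^ ((d:ℝ)-1) * 2 ^ d * ω) * t * r ^ d * (b₁ * (t*r/2) ^ ((d:ℝ)-1)) := by
  have hd1 : (1:ℝ) ≤ (d:ℝ) := by exact_mod_cast hd
  have h5 : (5*r:ℝ) ^ ((d:ℝ)-1) = 5 ^ ((d:ℝ)-1) * r ^ ((d:ℝ)-1) :=
    Real.mul_rpow (by norm_num) hr.le
  have h10 : (10:ℝ) ^ ((d:ℝ)-1) = 5 ^ ((d:ℝ)-1) * 2 ^ ((d:ℝ)-1) := by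
    rw [← Real.mul_rpow (by norm_num) (by norm_num)]; norm_num
  have htr2 : (t*r/2:ℝ) ^ ((d:ℝ)-1) = t ^ ((d:ℝ)-1) * r ^ ((d:ℝ)-1) / 2 ^ ((d:ℝ)-1) := by
    rw [Real.div_rpow (by positivity) (by norm_num), Real.mul_rpow ht.le hr.le]
  have htd : (t:ℝ) ^ d = t * t ^ ((d:ℝ)-1) := by
    rw [← Real.rpow_natCast t d, ← Real.rpow_one_add' ht.le (by intro h; linarith)]
    ring_nf
  have hmul : (2*(t*r):ℝ) ^ d = 2 ^ d * (t ^ d * r ^ d) := by rw [mul_pow, mul_pow]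
  have h2pos : (0:ℝ) < 2 ^ ((d:ℝ)-1) := Real.rpow_pos_of_pos (by norm_num) _
  rw [h5, h10, htr2, hmul, htd]
  field_simp

lemma strip_core (d : ℕ) (hd : 1 ≤ d) (Ξ : Set (EuclideanSpace ℝ (Fin d)))
    (b₁ b₂ : ℝ) (hb₁ : 0 < b₁) (hb : b₁ ≤ b₂)
    (hAD : ∀ x ∈ frontier Ξ, ∀ r : ℝ, 0 < r → r ≤ 1 →
      ENNReal.ofReal (b₁ * r ^ ((d : ℝ) - 1)) ≤ μH[(d : ℝ) - 1] (frontier Ξ ∩ ball x r) ∧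
        μH[(d : ℝ) - 1] (frontier Ξ ∩ ball x r) ≤ ENNReal.ofReal (b₂ * r ^ ((d : ℝ) - 1))) :
    ∃ C > 0, ∀ (x₀ : EuclideanSpace ℝ (Fin d)), ∀ r t : ℝ, 0 < r → r ≤ 1/8 → 0 < t → t ≤ 1 →
      volume {x ∈ Ξ | dist x x₀ < r ∧ EMetric.infEdist x Ξᶜ ≤ ENNReal.ofReal (t * r)} ≤
        ENNReal.ofReal (C * t * r ^ d) := by
  haveI : Nonempty (Fin d) := ⟨⟨0, hd⟩⟩
  set V := volume (ball (0 : EuclideanSpace ℝ (Fin d)) 1) with hVdef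
  have hVne : V ≠ ⊤ := measure_ball_lt_top.ne
  set ω := V.toReal with hωdef
  have hωpos : 0 < ω := ENNReal.toReal_pos (measure_ball_pos volume 0 one_pos).ne' hVne
  have hVω : V = ENNReal.ofReal ω := (ENNReal.ofReal_toReal hVne).symm
  clear_value ω
  have hb₂ : 0 < b₂ := hb₁.trans_le hb
  refine ⟨(b₂/b₁) * 10 ^ ((d:ℝ)-1) * 2 ^ d * ω,
    by exact mul_pos (mul_pos (mul_pos (div_pos hb₂ hb₁)
      (Real.rpow_pos_of_pos (by norm_num) _)) (by positivity)) hωpos, ?_⟩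
  intro x₀ r t hr hr8 ht ht1
  set C₀ := (b₂/b₁) * 10 ^ ((d:ℝ)-1) * 2 ^ d * ω with hC₀def
  set S := {x ∈ Ξ | dist x x₀ < r ∧ EMetric.infEdist x Ξᶜ ≤ ENNReal.ofReal (t * r)} with hSdef
  rcases S.eq_empty_or_nonempty with hS | ⟨x₁, hx₁⟩
  · rw [hS, measure_empty]; exact zero_le
  have hne : Ξ ≠ univ := by
    intro h
    have h2 := hx₁.2.2
    rw [h, compl_univ, EMetric.infEdist, Metric.infEDist_empty, top_le_iff] at h2
    exact ENNReal.ofReal_ne_top h2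
  set F := frontier Ξ ∩ closedBall x₀ (2*r) with hFdef
  -- every point of S is within t*r of a point of F
  have hSF : ∀ x ∈ S, ∃ y ∈ F, dist x y ≤ t*r := by
    intro x hx
    obtain ⟨y, hyf, hyd⟩ := exists_mem_frontier_infDist_compl_eq_dist hx.1 hne
    have hdist : dist x y ≤ t*r := by
      rw [← hyd]
      exact ENNReal.toReal_le_of_le_ofReal (by positivity) hx.2.2
    refine ⟨y, ⟨hyf, mem_closedBall.2 ?_⟩, hdist⟩
    have h1 := dist_triangle y x x₀
    have h2 : dist y x ≤ t*r := by rwa [dist_comm]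
    have h3 : dist x x₀ < r := hx.2.1
    nlinarith
  -- maximal (t*r)-separated subset of F
  set P : Set (Set (EuclideanSpace ℝ (Fin d))) :=
    {M | M ⊆ F ∧ M.Pairwise fun a b => t*r ≤ dist a b} with hPdef
  have hzorn : ∀ c ⊆ P, IsChain (· ⊆ ·) c → ∃ ub ∈ P, ∀ s ∈ c, s ⊆ ub := by
    intro c hcP hchain
    refine ⟨⋃₀ c, ⟨sUnion_subset fun s hs => (hcP hs).1, ?_⟩, fun s hs => subset_sUnion_of_mem hs⟩
    intro a ha b hb' hab
    obtain ⟨sa, hsac, hasa⟩ := ha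
    obtain ⟨sb, hsbc, hbsb⟩ := hb'
    rcases hchain.total hsac hsbc with hsub | hsub
    · exact (hcP hsbc).2 (hsub hasa) hbsb hab
    · exact (hcP hsac).2 hasa (hsub hbsb) hab
  obtain ⟨M, hM⟩ := zorn_subset P hzorn
  have hMF : M ⊆ F := hM.prop.1
  have hMsep : M.Pairwise fun a b => t*r ≤ dist a b := hM.prop.2
  have htr : 0 < t*r := by positivity
  have hnet : ∀ z ∈ F, ∃ y ∈ M, dist z y < t*r := by
    intro z hz
    by_contra hcon
    push_neg at hcon
    have hzM : z ∉ M := fun h => absurd (hcon z h) (by simp [htr])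
    have hins : insert z M ∈ P := by
      refine ⟨insert_subset hz hMF, ?_⟩
      haveI : Std.Symm (fun a b : EuclideanSpace ℝ (Fin d) => t*r ≤ dist a b) :=
        ⟨fun a b h => by rwa [dist_comm]⟩
      rw [Set.pairwise_insert_of_symm]
      exact ⟨hMsep, fun b hbM _ => hcon b hbM⟩
    exact hzM (hM.2 hins (subset_insert z M) (mem_insert z M))
  -- M is finite
  have hMfin : M.Finite := by
    by_contra hinf
    obtain ⟨T, hTF, hTfin, hTcov⟩ :=
      (isCompact_closedBall x₀ (2*r)).finite_cover_balls (show (0:ℝ) < t*r/2 by positivity)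
    have hMsub : M ⊆ ⋃ c ∈ T, M ∩ ball c (t*r/2) := by
      intro z hz
      obtain ⟨c, hcT, hzc⟩ := mem_iUnion₂.1 (hTcov (hMF hz).2)
      exact mem_iUnion₂.2 ⟨c, hcT, hz, hzc⟩
    have hall : ¬ ∀ c ∈ T, (M ∩ ball c (t*r/2)).Finite := by
      intro hall
      exact hinf ((hTfin.biUnion hall).subset hMsub)
    push_neg at hall
    obtain ⟨c, hcT, hcinf⟩ := hall
    obtain ⟨a, ha, b, hb', hab⟩ :=
      (show (M ∩ ball c (t*r/2)).Infinite from hcinf).nontrivial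
    have hsep := hMsep ha.1 hb'.1 hab
    have h1 : dist a c < t*r/2 := mem_ball.1 ha.2
    have h2 : dist b c < t*r/2 := mem_ball.1 hb'.2
    have h3 := dist_triangle a c b
    rw [dist_comm b c] at h2
    linarith
  -- cardinality bound for finite subsets of M
  have hcard : ∀ X : Finset (EuclideanSpace ℝ (Fin d)), ↑X ⊆ M →
      (X.card : ℝ) * (b₁ * (t*r/2) ^ ((d:ℝ)-1)) ≤ b₂ * (5*r) ^ ((d:ℝ)-1) := by
    intro X hXM
    rcases X.eq_empty_or_nonempty with rfl | ⟨y₀, hy₀⟩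
    · simp; positivity
    have hy₀M : y₀ ∈ M := hXM hy₀
    have hy₀F : y₀ ∈ F := hMF hy₀M
    have hdisj : (↑X : Set (EuclideanSpace ℝ (Fin d))).PairwiseDisjoint
        (fun y => frontier Ξ ∩ ball y (t*r/2)) := by
      intro a haX b hbX hab
      have hsep := hMsep (hXM haX) (hXM hbX) hab
      refine Set.disjoint_left.2 fun z hza hzb => ?_
      have h1 : dist z a < t*r/2 := mem_ball.1 hza.2
      have h2 : dist z b < t*r/2 := mem_ball.1 hzb.2
      have h3 := dist_triangle a z b
      rw [dist_comm z a] at h1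
      linarith
    have hmeas : ∀ y ∈ X, MeasurableSet (frontier Ξ ∩ ball y (t*r/2)) := fun y _ =>
      isClosed_frontier.measurableSet.inter measurableSet_ball
    have hsub : (⋃ y ∈ X, frontier Ξ ∩ ball y (t*r/2)) ⊆ frontier Ξ ∩ ball y₀ (5*r) := by
      intro z hz
      obtain ⟨y, hyX, hzmem⟩ := mem_iUnion₂.1 hz
      have hzf := hzmem.1
      have hzy : dist z y < t*r/2 := mem_ball.1 hzmem.2
      refine ⟨hzf, mem_ball.2 ?_⟩
      have hyF : y ∈ F := hMF (hXM hyX)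
      have h1 : dist y x₀ ≤ 2*r := mem_closedBall.1 hyF.2
      have h2 : dist y₀ x₀ ≤ 2*r := mem_closedBall.1 hy₀F.2
      have h3 := dist_triangle z y y₀
      have h4 := dist_triangle y x₀ y₀
      rw [dist_comm x₀ y₀] at h4
      nlinarith
    have hupper := (hAD y₀ hy₀F.1 (5*r) (by positivity) (by linarith)).2
    have hlower : ∀ y ∈ X, ENNReal.ofReal (b₁ * (t*r/2) ^ ((d:ℝ)-1)) ≤
        μH[(d : ℝ) - 1] (frontier Ξ ∩ ball y (t*r/2)) := fun y hy =>
      (hAD y (hMF (hXM hy)).1 (t*r/2) (by positivity) (by nlinarith)).1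
    have hchain : (X.card : ℝ≥0∞) * ENNReal.ofReal (b₁ * (t*r/2) ^ ((d:ℝ)-1)) ≤
        ENNReal.ofReal (b₂ * (5*r) ^ ((d:ℝ)-1)) := by
      calc (X.card : ℝ≥0∞) * ENNReal.ofReal (b₁ * (t*r/2) ^ ((d:ℝ)-1))
          = X.card • ENNReal.ofReal (b₁ * (t*r/2) ^ ((d:ℝ)-1)) := (nsmul_eq_mul _ _).symm
        _ ≤ ∑ y ∈ X, μH[(d : ℝ) - 1] (frontier Ξ ∩ ball y (t*r/2)) :=
            Finset.card_nsmul_le_sum X _ _ hlower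
        _ = μH[(d : ℝ) - 1] (⋃ y ∈ X, frontier Ξ ∩ ball y (t*r/2)) :=
            (measure_biUnion_finset hdisj hmeas).symm
        _ ≤ μH[(d : ℝ) - 1] (frontier Ξ ∩ ball y₀ (5*r)) := measure_mono hsub
        _ ≤ ENNReal.ofReal (b₂ * (5*r) ^ ((d:ℝ)-1)) := hupper
    rw [show ((X.card : ℝ≥0∞)) = ENNReal.ofReal (X.card : ℝ) by
          rw [ENNReal.ofReal_natCast],
        ← ENNReal.ofReal_mul (Nat.cast_nonneg _)] at hchain
    exact (ENNReal.ofReal_le_ofReal_iff (by positivity)).1 hchain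
  -- covering S by balls of radius 2*(t*r) around points of M
  have hcover : S ⊆ ⋃ y ∈ hMfin.toFinset, ball y (2*(t*r)) := by
    intro x hx
    obtain ⟨y, hyF, hxy⟩ := hSF x hx
    obtain ⟨y', hy'M, hyy'⟩ := hnet y hyF
    refine mem_iUnion₂.2 ⟨y', hMfin.mem_toFinset.2 hy'M, mem_ball.2 ?_⟩
    have := dist_triangle x y y'
    linarith
  have hballvol : ∀ y : EuclideanSpace ℝ (Fin d),
      volume (ball y (2*(t*r))) = ENNReal.ofReal ((2*(t*r)) ^ d * ω) := by
    intro y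
    rw [Measure.addHaar_ball volume y (by positivity), finrank_euclideanSpace_fin, ← hVdef, hVω,
      ← ENNReal.ofReal_mul (by positivity)]
  have hvol : volume S ≤ (hMfin.toFinset.card : ℝ≥0∞) * ENNReal.ofReal ((2*(t*r)) ^ d * ω) := by
    calc volume S ≤ volume (⋃ y ∈ hMfin.toFinset, ball y (2*(t*r))) := measure_mono hcover
      _ ≤ ∑ y ∈ hMfin.toFinset, volume (ball y (2*(t*r))) := measure_biUnion_finset_le _ _
      _ = hMfin.toFinset.card • ENNReal.ofReal ((2*(t*r)) ^ d * ω) := by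
          rw [Finset.sum_congr rfl fun y _ => hballvol y, Finset.sum_const]
      _ = (hMfin.toFinset.card : ℝ≥0∞) * ENNReal.ofReal ((2*(t*r)) ^ d * ω) := nsmul_eq_mul _ _
  refine hvol.trans ?_
  rw [show ((hMfin.toFinset.card : ℝ≥0∞)) = ENNReal.ofReal (hMfin.toFinset.card : ℝ) by
        rw [ENNReal.ofReal_natCast],
      ← ENNReal.ofReal_mul (Nat.cast_nonneg _)]
  apply ENNReal.ofReal_le_ofReal
  rw [hC₀def]
  have h1 := hcard hMfin.toFinset (fun y hy => hMfin.mem_toFinset.1 hy)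
  have hid := strip_calc1 d hd b₁ b₂ t r ω hb₁ hb₂ ht hr hωpos
  have hapos : 0 < b₁ * (t*r/2) ^ ((d:ℝ)-1) := by
    have := Real.rpow_pos_of_pos (show (0:ℝ) < t*r/2 by positivity) ((d:ℝ)-1)
    positivity
  set n := (hMfin.toFinset.card : ℝ) with hndef
  have hmul := mul_le_mul_of_nonneg_right h1 (show 0 ≤ (2*(t*r))^d * ω by positivity)
  rw [hid] at hmul
  have h2 : (n * ((2*(t*r))^d * ω)) * (b₁ * (t*r/2) ^ ((d:ℝ)-1)) ≤
      ((b₂/b₁) * 10 ^ ((d:ℝ)-1) * 2 ^ d * ω * t * r ^ d) * (b₁ * (t*r/2) ^ ((d:ℝ)-1)) := by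
    have heq : (n * ((2*(t*r))^d * ω)) * (b₁ * (t*r/2) ^ ((d:ℝ)-1)) =
        (n * (b₁ * (t*r/2) ^ ((d:ℝ)-1))) * ((2*(t*r))^d * ω) := by ring
    rw [heq]
    exact hmul
  exact le_of_mul_le_mul_right h2 hapos


/-- **Boundary strip lemma**: if `Ξ ⊆ ℝ^d` is open and `∂Ξ` is a `(d-1)`-set, then the part of
a ball `B(x₀, r)` in `Ξ` lying at distance at most `t·r` from the complement of `Ξ` has measure
at most `C·t·r^d`. -/
theorem boundary_strip_lemma
    (d : ℕ) (hd : 1 ≤ d)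
    (Ξ : Set (EuclideanSpace ℝ (Fin d))) (hΞ : IsOpen Ξ)
    (b₁ b₂ : ℝ) (hb₁ : 0 < b₁) (hb : b₁ ≤ b₂)
    (hAD : ∀ x ∈ frontier Ξ, ∀ r : ℝ, 0 < r → r ≤ 1 →
      ENNReal.ofReal (b₁ * r ^ ((d : ℝ) - 1)) ≤ μH[(d : ℝ) - 1] (frontier Ξ ∩ ball x r) ∧
        μH[(d : ℝ) - 1] (frontier Ξ ∩ ball x r) ≤ ENNReal.ofReal (b₂ * r ^ ((d : ℝ) - 1)))
    (r₀ t₀ : ℝ) (hr₀ : 0 < r₀) (ht₀ : 0 < t₀) :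
    ∃ C > 0, ∀ x₀ ∈ closure Ξ, ∀ r t : ℝ, 0 < r → r ≤ r₀ → 0 < t → t ≤ t₀ →
      volume {x ∈ Ξ | dist x x₀ < r ∧ EMetric.infEdist x Ξᶜ ≤ ENNReal.ofReal (t * r)} ≤
        ENNReal.ofReal (C * t * r ^ d) := by
  haveI : Nonempty (Fin d) := ⟨⟨0, hd⟩⟩
  obtain ⟨C₀, hC₀, hcore⟩ := strip_core d hd Ξ b₁ b₂ hb₁ hb hAD
  set V := volume (ball (0 : EuclideanSpace ℝ (Fin d)) 1) with hVdef
  have hVne : V ≠ ⊤ := measure_ball_lt_top.ne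
  set ω := V.toReal with hωdef
  have hωpos : 0 < ω := ENNReal.toReal_pos (measure_ball_pos volume 0 one_pos).ne' hVne
  have hVω : V = ENNReal.ofReal ω := (ENNReal.ofReal_toReal hVne).symm
  clear_value ω
  have hballvol : ∀ (y : EuclideanSpace ℝ (Fin d)) (s : ℝ), 0 ≤ s →
      volume (ball y s) = ENNReal.ofReal (s ^ d * ω) := by
    intro y s hs
    rw [Measure.addHaar_ball volume y hs, finrank_euclideanSpace_fin, ← hVdef, hVω,
      ← ENNReal.ofReal_mul (by positivity)]
  obtain ⟨T, hT0, hTfin, hTcov⟩ :=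
    (isCompact_closedBall (0 : EuclideanSpace ℝ (Fin d)) r₀).finite_cover_balls
      (show (0:ℝ) < 1/16 by norm_num)
  set X := hTfin.toFinset with hXdef
  have hX1 : 1 ≤ X.card := by
    obtain ⟨c, hcT, -⟩ := mem_iUnion₂.1 (hTcov (mem_closedBall_self hr₀.le))
    exact Finset.card_pos.2 ⟨c, hTfin.mem_toFinset.2 hcT⟩
  have hX1' : (1:ℝ) ≤ (X.card : ℝ) := by exact_mod_cast hX1
  refine ⟨X.card * max C₀ ω + ω, by
    have : 0 ≤ (X.card:ℝ) * max C₀ ω :=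
      mul_nonneg (Nat.cast_nonneg _) (hωpos.le.trans (le_max_right _ _))
    linarith, ?_⟩
  intro x₀ hx₀ r t hr hrr₀ ht htt₀
  set Cb := (X.card : ℝ) * max C₀ ω + ω with hCbdef
  have hCb1 : C₀ ≤ Cb := by
    have h1 : C₀ ≤ max C₀ ω := le_max_left _ _
    have h2 : max C₀ ω ≤ (X.card : ℝ) * max C₀ ω := by nlinarith [le_max_right C₀ ω]
    nlinarith
  have hCb2 : ω ≤ Cb := by
    have h2 : 0 ≤ (X.card : ℝ) * max C₀ ω :=
      mul_nonneg (Nat.cast_nonneg _) (hωpos.le.trans (le_max_right _ _))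
    nlinarith
  set S := {x ∈ Ξ | dist x x₀ < r ∧ EMetric.infEdist x Ξᶜ ≤ ENNReal.ofReal (t * r)} with hSdef
  have hSball : S ⊆ ball x₀ r := fun x hx => mem_ball.2 hx.2.1
  by_cases h1t : 1 ≤ t
  · calc volume S ≤ volume (ball x₀ r) := measure_mono hSball
      _ = ENNReal.ofReal (r ^ d * ω) := hballvol x₀ r hr.le
      _ ≤ ENNReal.ofReal (Cb * t * r ^ d) := by
          apply ENNReal.ofReal_le_ofReal
          have hrd : (0:ℝ) ≤ r ^ d := by positivity
          have hCbpos : 0 < Cb := lt_of_lt_of_le hωpos hCb2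
          nlinarith [mul_le_mul_of_nonneg_right hCb2 hrd,
            mul_le_mul_of_nonneg_right (le_mul_of_one_le_right hCbpos.le h1t) hrd]
  push_neg at h1t
  by_cases hr8 : r ≤ 1/8
  · refine (hcore x₀ r t hr hr8 ht h1t.le).trans (ENNReal.ofReal_le_ofReal ?_)
    have hrd : (0:ℝ) ≤ r ^ d := by positivity
    exact mul_le_mul_of_nonneg_right (mul_le_mul_of_nonneg_right hCb1 ht.le) hrd
  push_neg at hr8
  -- key power inequality for r ≥ 1/8
  have hkey : 8*(t*r)*(1/8:ℝ)^d ≤ t * r^d := by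
    obtain ⟨e, rfl⟩ : ∃ e, d = e + 1 := ⟨d-1, (Nat.succ_pred_eq_of_pos hd).symm⟩
    rw [pow_succ, pow_succ]
    have hpe : ((1:ℝ)/8)^e ≤ r^e := pow_le_pow_left₀ (by norm_num) hr8.le e
    have h0 : (0:ℝ) ≤ (1/8:ℝ)^e := by positivity
    nlinarith [mul_le_mul_of_nonneg_left hpe (mul_nonneg ht.le hr.le)]
  -- cover S by small balls
  have hScov : S ⊆ ⋃ c ∈ X, S ∩ ball (x₀ + c) (1/16) := by
    intro x hx
    have hx0 : x - x₀ ∈ closedBall (0 : EuclideanSpace ℝ (Fin d)) r₀ := by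
      rw [mem_closedBall, dist_zero_right]
      have : dist x x₀ < r := hx.2.1
      rw [dist_eq_norm] at this
      linarith
    obtain ⟨c, hcT, hxc⟩ := mem_iUnion₂.1 (hTcov hx0)
    refine mem_iUnion₂.2 ⟨c, hTfin.mem_toFinset.2 hcT, hx, mem_ball.2 ?_⟩
    have : dist (x - x₀) c < 1/16 := mem_ball.1 hxc
    rw [dist_eq_norm] at this ⊢
    have heq : x - (x₀ + c) = x - x₀ - c := by abel
    rw [heq]
    exact this
  have hsmall : ∀ c : EuclideanSpace ℝ (Fin d),
      volume (S ∩ ball (x₀ + c) (1/16)) ≤ ENNReal.ofReal (max C₀ ω * t * r ^ d) := by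
    intro c
    rcases (S ∩ ball (x₀ + c) (1/16)).eq_empty_or_nonempty with he | ⟨x₁, hx₁S, hx₁b⟩
    · rw [he, measure_empty]; exact zero_le
    set t' := 8*(t*r) with ht'def
    have ht'pos : 0 < t' := by positivity
    have hsub : S ∩ ball (x₀ + c) (1/16) ⊆
        {x ∈ Ξ | dist x x₁ < 1/8 ∧ EMetric.infEdist x Ξᶜ ≤ ENNReal.ofReal (t' * (1/8))} := by
      rintro x ⟨hxS, hxb⟩
      refine ⟨hxS.1, ?_, ?_⟩
      · have h1 : dist x (x₀ + c) < 1/16 := mem_ball.1 hxb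
        have h2 : dist x₁ (x₀ + c) < 1/16 := mem_ball.1 hx₁b
        have h3 := dist_triangle x (x₀ + c) x₁
        rw [dist_comm x₁ (x₀+c)] at h2
        linarith
      · have : t' * (1/8) = t * r := by rw [ht'def]; ring
        rw [this]
        exact hxS.2.2
    by_cases ht'1 : t' ≤ 1
    · calc volume (S ∩ ball (x₀ + c) (1/16))
          ≤ volume {x ∈ Ξ | dist x x₁ < 1/8 ∧
              EMetric.infEdist x Ξᶜ ≤ ENNReal.ofReal (t' * (1/8))} := measure_mono hsub
        _ ≤ ENNReal.ofReal (C₀ * t' * (1/8) ^ d) :=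
            hcore x₁ (1/8) t' (by norm_num) le_rfl ht'pos ht'1
        _ ≤ ENNReal.ofReal (max C₀ ω * t * r ^ d) := by
            apply ENNReal.ofReal_le_ofReal
            have h1 : C₀ * (t' * (1/8:ℝ)^d) ≤ C₀ * (t * r^d) := by
              apply mul_le_mul_of_nonneg_left _ hC₀.le
              rw [ht'def]
              exact hkey
            have h2 : C₀ * (t * r^d) ≤ max C₀ ω * (t * r^d) := by
              apply mul_le_mul_of_nonneg_right (le_max_left _ _) (by positivity)
            nlinarith
    · push_neg at ht'1
      have hsub2 : S ∩ ball (x₀ + c) (1/16) ⊆ ball x₁ (1/8) :=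
        fun x hx => mem_ball.2 (hsub hx).2.1
      calc volume (S ∩ ball (x₀ + c) (1/16)) ≤ volume (ball x₁ (1/8)) := measure_mono hsub2
        _ = ENNReal.ofReal ((1/8:ℝ) ^ d * ω) := hballvol x₁ (1/8) (by norm_num)
        _ ≤ ENNReal.ofReal (max C₀ ω * t * r ^ d) := by
            apply ENNReal.ofReal_le_ofReal
            have h0 : (0:ℝ) ≤ (1/8:ℝ)^d := by positivity
            have h1 : (1/8:ℝ)^d * ω ≤ ω * (t' * (1/8:ℝ)^d) := by
              nlinarith [mul_le_mul_of_nonneg_left ht'1.le (mul_nonneg hωpos.le h0)]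
            have h2 : ω * (t' * (1/8:ℝ)^d) ≤ ω * (t * r^d) := by
              apply mul_le_mul_of_nonneg_left _ hωpos.le
              rw [ht'def]; exact hkey
            have h3 : ω * (t * r^d) ≤ max C₀ ω * (t * r^d) := by
              apply mul_le_mul_of_nonneg_right (le_max_right _ _) (by positivity)
            nlinarith
  calc volume S ≤ volume (⋃ c ∈ X, S ∩ ball (x₀ + c) (1/16)) := measure_mono hScov
    _ ≤ ∑ c ∈ X, volume (S ∩ ball (x₀ + c) (1/16)) := measure_biUnion_finset_le _ _
    _ ≤ ∑ _c ∈ X, ENNReal.ofReal (max C₀ ω * t * r ^ d) :=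
        Finset.sum_le_sum fun c _ => hsmall c
    _ = (X.card : ℝ≥0∞) * ENNReal.ofReal (max C₀ ω * t * r ^ d) := by
        rw [Finset.sum_const, nsmul_eq_mul]
    _ ≤ ENNReal.ofReal (Cb * t * r ^ d) := by
        rw [show ((X.card : ℝ≥0∞)) = ENNReal.ofReal (X.card : ℝ) by rw [ENNReal.ofReal_natCast],
          ← ENNReal.ofReal_mul (Nat.cast_nonneg _)]
        apply ENNReal.ofReal_le_ofReal
        have hrd : (0:ℝ) ≤ t * r ^ d := by positivity
        have : (X.card : ℝ) * (max C₀ ω * t * r ^ d) = ((X.card : ℝ) * max C₀ ω) * (t * r^d) := by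
          ring
        rw [this, hCbdef]
        nlinarith
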